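/- Let δ ≥ 0, and let goods be indexed 1,…,m with an additive valuation v satisfying v(1) ≥ v(2) ≥ … ≥ v(m) (with the convention v(k)=0 for k > m), m ≥ 2n, and suppose v is normalized for n agents, i.e., there is a partition (P_1,…,P_n) of {1,…,m} with v(P_j)=1 for every j. Suppose v(j) < 3/4 + δ for every good j. Let ℓ ≥ 1 be an integer such that there exists k with ℓ ≤ k ≤ n and v(k) + v(2n−k+ℓ) > 1. Then ∑_{g = 2n+1}^{m} v(g) > ℓ·(1/4 − δ). -/

import Mathlib

open Finset

/-- `P` is a partition of the finite set `S` of goods into `d` (possibly empty) bundles. -/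
def IsPartition {d : ℕ} (P : Fin d → Finset ℕ) (S : Finset ℕ) : Prop :=
  (∀ i j : Fin d, i ≠ j → Disjoint (P i) (P j)) ∧ Finset.univ.biUnion P = S

/-- The maximin share `MMS^d_v(S)`: the maximum, over all partitions of `S` into `d`
(possibly empty) bundles, of the minimum bundle value under the additive valuation `v`. -/
noncomputable def MMS (v : ℕ → ℝ) (d : ℕ) (S : Finset ℕ) : ℝ :=
  sSup {x : ℝ | ∃ P : Fin d → Finset ℕ, IsPartition P S ∧ x = ⨅ j, (P j).sum v}

/-- lower bound on the total value of the goods beyond the first 2n. -/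
theorem small_goods_total_value
    (δ : ℝ) (hδ : 0 ≤ δ)
    (m n : ℕ) (hn : 1 ≤ n) (hm : 2*n ≤ m)
    (v : ℕ → ℝ) (hnn : ∀ k, 0 ≤ v k) (hzero : ∀ k, m < k → v k = 0)
    (hord : ∀ j k : ℕ, 1 ≤ j → j ≤ k → k ≤ m → v k ≤ v j)
    (hnorm : ∃ P : Fin n → Finset ℕ,
      IsPartition P (Finset.Icc 1 m) ∧ ∀ j, (P j).sum v = 1)
    (hbound : ∀ k, 1 ≤ k → k ≤ m → v k < 3/4 + δ)
    (ℓ : ℕ) (hℓ : 1 ≤ ℓ)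
    (hshift : ∃ k, ℓ ≤ k ∧ k ≤ n ∧ 1 < v k + v (2*n - k + ℓ)) :
    (ℓ : ℝ) * (1/4 - δ) < ∑ g ∈ Finset.Icc (2*n + 1) m, v g := by
  classical
  obtain ⟨P, ⟨hdisj, hcover⟩, hsum⟩ := hnorm
  obtain ⟨k, hlk, hkn, hks⟩ := hshift
  have hkm : k ≤ m := by omega
  have h2nm : 2*n - k + ℓ ≤ m := by omega
  have hPsub : ∀ j : Fin n, P j ⊆ Finset.Icc 1 m := by
    intro j
    rw [← hcover]
    exact Finset.subset_biUnion_of_mem P (Finset.mem_univ j)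
  have hFex : ∀ g : ℕ, ∃ j : Fin n, g ∈ Finset.Icc 1 m → g ∈ P j := by
    intro g
    by_cases h : g ∈ Finset.Icc 1 m
    · rw [← hcover] at h
      obtain ⟨j, _, hj⟩ := Finset.mem_biUnion.mp h
      exact ⟨j, fun _ => hj⟩
    · exact ⟨⟨0, hn⟩, fun hc => absurd hc h⟩
  choose F hF using hFex
  have hpair : ∀ (j : Fin n) (a y : ℕ), a ∈ P j → y ∈ P j → a ≠ y → v a + v y ≤ 1 := by
    intro j a y ha hy hne
    have he : v a + v y = ∑ g ∈ ({a, y} : Finset ℕ), v g := (Finset.sum_pair hne).symm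
    rw [he, ← hsum j]
    apply Finset.sum_le_sum_of_subset_of_nonneg
    · intro x hx
      rcases Finset.mem_insert.mp hx with h | h
      · exact h ▸ ha
      · exact (Finset.mem_singleton.mp h) ▸ hy
    · exact fun x _ _ => hnn x
  have hbig : ∀ a y : ℕ, 1 ≤ a → a ≤ k → 1 ≤ y → y ≤ 2*n - k + ℓ → 1 < v a + v y := by
    intro a y h1 h2 h3 h4
    have hva : v k ≤ v a := hord a k h1 h2 hkm
    have hvy : v (2*n - k + ℓ) ≤ v y := hord y (2*n - k + ℓ) h3 h4 h2nm
    linarith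
  have hsep : ∀ (j : Fin n) (a y : ℕ), a ∈ P j → y ∈ P j → 1 ≤ a → a ≤ k →
      1 ≤ y → y ≤ 2*n - k + ℓ → a = y := by
    intro j a y ha hy h1 h2 h3 h4
    by_contra hne
    exact absurd (hpair j a y ha hy hne) (not_le.mpr (hbig a y h1 h2 h3 h4))
  set A : Finset ℕ := Finset.Icc 1 k with hA
  have hAm : ∀ a ∈ A, a ∈ Finset.Icc 1 m := by
    intro a ha
    simp only [hA, Finset.mem_Icc] at ha ⊢
    omega
  have hAP : ∀ a ∈ A, a ∈ P (F a) := fun a ha => hF a (hAm a ha)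
  have hFinj : ∀ a ∈ A, ∀ b ∈ A, F a = F b → a = b := by
    intro a ha b hb heq
    have h1 := hAP a ha
    have h2 := hAP b hb
    rw [heq] at h1
    have ha' := ha; have hb' := hb
    simp only [hA, Finset.mem_Icc] at ha' hb'
    exact hsep (F b) a b h1 h2 ha'.1 ha'.2 hb'.1 (by omega)
  set Abad : Finset ℕ := A.filter (fun a => ∃ y ∈ P (F a), y ≠ a ∧ y ≤ 2*n) with hAbad
  have hbadex : ∀ a ∈ Abad, ∃ y, y ∈ P (F a) ∧ y ≠ a ∧ y ≤ 2*n := by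
    intro a ha
    simp only [hAbad, Finset.mem_filter] at ha
    obtain ⟨_, y, hy1, hy2, hy3⟩ := ha
    exact ⟨y, hy1, hy2, hy3⟩
  choose! Yf hY1 hY2 hY3 using hbadex
  have hcardbad : Abad.card ≤ k - ℓ := by
    have hle : Abad.card ≤ (Finset.Icc (2*n - k + ℓ + 1) (2*n)).card := by
      apply Finset.card_le_card_of_injOn Yf
      · intro a ha
        have h1 := hY1 a ha
        have h2 := hY2 a ha
        have h3 := hY3 a ha
        have haA : a ∈ A := (Finset.mem_filter.mp ha).1
        have hym : Yf a ∈ Finset.Icc 1 m := hPsub _ h1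
        have haA' := haA
        simp only [hA, Finset.mem_Icc] at haA'
        simp only [Finset.mem_Icc, Finset.mem_coe] at hym ⊢
        constructor
        · by_contra hc
          push_neg at hc
          exact h2 (hsep (F a) a (Yf a) (hAP a haA) h1 haA'.1 haA'.2 hym.1 (by omega)).symm
        · exact h3
      · intro a ha b hb heq
        have hFab : F a = F b := by
          by_contra hne
          have hcon := Finset.disjoint_left.mp (hdisj (F a) (F b) hne) (hY1 a ha)
          rw [heq] at hcon
          exact hcon (hY1 b hb)
        exact hFinj a (Finset.mem_filter.mp ha).1 b (Finset.mem_filter.mp hb).1 hFab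
    rwa [Nat.card_Icc, show 2*n + 1 - (2*n - k + ℓ + 1) = k - ℓ by omega] at hle
  have hcardA : A.card = k := by
    simp [hA]
  have hgood : ℓ ≤ (A \ Abad).card := by
    have hsub : Abad ⊆ A := Finset.filter_subset _ _
    have hc := Finset.card_sdiff_of_subset hsub
    omega
  obtain ⟨A2, hA2sub, hA2card⟩ := Finset.exists_subset_card_eq hgood
  set T : Finset (Fin n) := A2.image F with hT
  have hA2A : A2 ⊆ A := hA2sub.trans Finset.sdiff_subset
  have hTcard : T.card = ℓ := by
    rw [hT, Finset.card_image_of_injOn, hA2card]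
    intro a ha b hb
    exact hFinj a (hA2A ha) b (hA2A hb)
  set W : Finset ℕ := Finset.Icc 1 (2*n) with hW
  have hTbound : ∀ j ∈ T, ∑ g ∈ P j ∩ W, v g < 3/4 + δ := by
    intro j hj
    obtain ⟨a, ha2, rfl⟩ := Finset.mem_image.mp hj
    have haA : a ∈ A := hA2A ha2
    have hnotbad : a ∉ Abad := (Finset.mem_sdiff.mp (hA2sub ha2)).2
    have hsub : P (F a) ∩ W ⊆ {a} := by
      intro y hy
      obtain ⟨hyP, hyW⟩ := Finset.mem_inter.mp hy
      simp only [hW, Finset.mem_Icc] at hyW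
      simp only [Finset.mem_singleton]
      by_contra hne
      exact hnotbad (Finset.mem_filter.mpr ⟨haA, y, hyP, hne, hyW.2⟩)
    have h1 : ∑ g ∈ P (F a) ∩ W, v g ≤ ∑ g ∈ ({a} : Finset ℕ), v g :=
      Finset.sum_le_sum_of_subset_of_nonneg hsub (fun x _ _ => hnn x)
    rw [Finset.sum_singleton] at h1
    have haA' := haA
    simp only [hA, Finset.mem_Icc] at haA'
    exact lt_of_le_of_lt h1 (hbound a haA'.1 (le_trans haA'.2 hkm))
  have hallbound : ∀ j : Fin n, ∑ g ∈ P j ∩ W, v g ≤ 1 := by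
    intro j
    rw [← hsum j]
    exact Finset.sum_le_sum_of_subset_of_nonneg Finset.inter_subset_left (fun x _ _ => hnn x)
  have hdisj2 : ((Finset.univ : Finset (Fin n)) : Set (Fin n)).PairwiseDisjoint (fun j => P j ∩ W) := by
    intro i _ j _ hne
    exact (hdisj i j hne).mono Finset.inter_subset_left Finset.inter_subset_left
  have hbi : Finset.univ.biUnion (fun j => P j ∩ W) = W := by
    ext g
    simp only [Finset.mem_biUnion, Finset.mem_univ, true_and, Finset.mem_inter]
    constructor
    · rintro ⟨j, _, hgW⟩
      exact hgW
    · intro hgW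
      have hgm : g ∈ Finset.Icc 1 m := by
        simp only [hW, Finset.mem_Icc] at hgW
        simp only [Finset.mem_Icc]
        omega
      exact ⟨F g, hF g hgm, hgW⟩
  have hWsum : ∑ g ∈ W, v g = ∑ j : Fin n, ∑ g ∈ P j ∩ W, v g := by
    have h := Finset.sum_biUnion (f := v) hdisj2
    rw [hbi] at h
    exact h
  have hdisjP : ((Finset.univ : Finset (Fin n)) : Set (Fin n)).PairwiseDisjoint P := by
    intro i _ j _ hne
    exact hdisj i j hne
  have htot : ∑ g ∈ Finset.Icc 1 m, v g = n := by
    rw [← hcover, Finset.sum_biUnion hdisjP]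
    simp [hsum]
  have hsplit : ∑ g ∈ W, v g + ∑ g ∈ Finset.Icc (2*n+1) m, v g = ∑ g ∈ Finset.Icc 1 m, v g := by
    have e1 : Finset.Icc 1 m = Finset.Ioc 0 m := by rw [← Finset.Icc_add_one_left_eq_Ioc, Nat.zero_add]
    have e2 : Finset.Icc (2*n+1) m = Finset.Ioc (2*n) m := by rw [← Finset.Icc_add_one_left_eq_Ioc]
    have e3 : (W : Finset ℕ) = Finset.Ioc 0 (2*n) := by rw [hW, ← Finset.Icc_add_one_left_eq_Ioc, Nat.zero_add]
    rw [e1, e2, e3]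
    exact Finset.sum_Ioc_consecutive v (Nat.zero_le (2*n)) hm
  have hTsub : T ⊆ Finset.univ := Finset.subset_univ T
  have hsumsplit : ∑ j ∈ Finset.univ \ T, (∑ g ∈ P j ∩ W, v g)
      + ∑ j ∈ T, (∑ g ∈ P j ∩ W, v g) = ∑ j : Fin n, ∑ g ∈ P j ∩ W, v g :=
    Finset.sum_sdiff hTsub
  have hTne : T.Nonempty := by
    rw [← Finset.card_pos, hTcard]; omega
  have hTlt : ∑ j ∈ T, (∑ g ∈ P j ∩ W, v g) < (ℓ : ℝ) * (3/4 + δ) := by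
    have := Finset.sum_lt_sum_of_nonempty hTne (fun j hj => hTbound j hj)
    rwa [Finset.sum_const, hTcard, nsmul_eq_mul] at this
  have hrest : ∑ j ∈ Finset.univ \ T, (∑ g ∈ P j ∩ W, v g) ≤ ((n - ℓ : ℕ) : ℝ) := by
    have hcr : (Finset.univ \ T).card = n - ℓ := by
      rw [Finset.card_sdiff_of_subset hTsub, hTcard, Finset.card_univ, Fintype.card_fin]
    calc ∑ j ∈ Finset.univ \ T, (∑ g ∈ P j ∩ W, v g)
        ≤ ∑ j ∈ Finset.univ \ T, (1 : ℝ) := Finset.sum_le_sum (fun j _ => hallbound j)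
      _ = ((n - ℓ : ℕ) : ℝ) := by rw [Finset.sum_const, hcr, nsmul_eq_mul, mul_one]
  have hln : ℓ ≤ n := le_trans hlk hkn
  have hcast : ((n - ℓ : ℕ) : ℝ) = (n : ℝ) - (ℓ : ℝ) := by
    push_cast [Nat.cast_sub hln]
    ring
  have hWlt : ∑ g ∈ W, v g < (n : ℝ) - (ℓ : ℝ) * (1/4 - δ) := by
    rw [hWsum, ← hsumsplit]
    rw [hcast] at hrest
    nlinarith [hrest, hTlt]
  have : (n : ℝ) = ∑ g ∈ W, v g + ∑ g ∈ Finset.Icc (2*n+1) m, v g := by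
    rw [hsplit, htot]
  linarith
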